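/- In a finite eGDN whose dependency graph G_T (constructed by a deterministic closure process from the initially modified slots S_i using union monotonic dir_Δ functions) is acyclic, the edge set of G_T is uniquely determined (up to isomorphism) by the eGDN G and the initial set S_i, independently of the order in which operation nodes are dequeued during construction. -/

import Mathlib

/-- A state of the dependency-graph construction: the queue of operation nodes,
the recorded sets `C[o]` of input slots with potentially unhandled deltas, and
the edge set of the trigger graph `G_T`. -/
structure CState (O S : Type*) where
  queue : List O
  C : O → Set S
  edges : Set (O × O)

section

variable {O S : Type*} (inS outS : O → Set S)

/-- An operation node `o` is adjacent to the slot set `X`. -/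
def Adjacent (X : Set S) (o : O) : Prop :=
  ((inS o ∪ outS o) ∩ X).Nonempty

/-- Initial state for the set `Si` of initially modified slots: the queue
enumerates (without repetition) exactly the operation nodes adjacent to `Si`,
`C[o] = Si ∩ in(o)` for all nodes adjacent to `Si` (and in particular for all
nodes), and the edge set is empty. -/
def Init (Si : Set S) (st : CState O S) : Prop :=
  st.queue.Nodup ∧
  (∀ o, o ∈ st.queue ↔ Adjacent inS outS Si o) ∧
  (∀ o, st.C o = Si ∩ inS o) ∧
  st.edges = ∅

/-- One construction step: dequeue `o`, compute `S_o = dir_Δ(o, C[o])`, add an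
edge from `o` to every node adjacent to `S_o` other than `o`, add `S_o ∩ in(o')`
to `C[o']` for all such nodes `o'`, enqueue them if absent, and reset `C[o]`. -/
def CStep (dirΔ : O → Set S → Set S) (st st' : CState O S) : Prop :=
  ∃ o q, st.queue = o :: q ∧
    st'.edges = st.edges ∪
      {p | p.1 = o ∧ p.2 ≠ o ∧ Adjacent inS outS (dirΔ o (st.C o)) p.2} ∧
    st'.C o = ∅ ∧
    (∀ o'', o'' ≠ o → st'.C o'' = st.C o'' ∪
        {x | x ∈ dirΔ o (st.C o) ∩ inS o'' ∧
          Adjacent inS outS (dirΔ o (st.C o)) o''}) ∧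
    st'.queue.Nodup ∧
    (∀ o', o' ∈ st'.queue ↔
      o' ∈ q ∨ (o' ≠ o ∧ Adjacent inS outS (dirΔ o (st.C o)) o'))

/-- A terminating (complete) execution of the construction in `n` steps. -/
def Exec (dirΔ : O → Set S → Set S) (Si : Set S)
    (f : ℕ → CState O S) (n : ℕ) : Prop :=
  Init inS outS Si (f 0) ∧
  (∀ k < n, CStep inS outS dirΔ (f k) (f (k + 1))) ∧
  (f n).queue = []

/-- The edge set contains a directed cycle (the construction aborts). -/
def HasCycle (E : Set (O × O)) : Prop :=
  ∃ v, Relation.TransGen (fun a b => (a, b) ∈ E) v v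

end

/- Auxiliary development -/
section Aux

variable {O S : Type*} (inS outS : O → Set S) (dirΔ : O → Set S → Set S) (Si : Set S)

lemma adjacent_mono {X Y : Set S} (h : X ⊆ Y) {o : O}
    (ha : Adjacent inS outS X o) : Adjacent inS outS Y o :=
  ha.mono (Set.inter_subset_inter_right _ h)

lemma adjacent_of_mem_inS {X : Set S} {o : O} {x : S} (hx : x ∈ X) (hi : x ∈ inS o) :
    Adjacent inS outS X o :=
  ⟨x, Set.mem_union_left _ hi, hx⟩

lemma adjacent_union {X Y : Set S} {o : O} :
    Adjacent inS outS (X ∪ Y) o ↔ Adjacent inS outS X o ∨ Adjacent inS outS Y o := by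
  constructor
  · rintro ⟨x, hx1, hx2 | hx2⟩
    · exact Or.inl ⟨x, hx1, hx2⟩
    · exact Or.inr ⟨x, hx1, hx2⟩
  · rintro (⟨x, hx1, hx2⟩ | ⟨x, hx1, hx2⟩)
    · exact ⟨x, hx1, Or.inl hx2⟩
    · exact ⟨x, hx1, Or.inr hx2⟩

variable (hum : ∀ o A B, dirΔ o A ∪ dirΔ o B = dirΔ o (A ∪ B))

include hum in
lemma dir_mono (o : O) : Monotone (dirΔ o) := by
  intro A B h
  have := hum o A B
  rw [Set.union_eq_self_of_subset_left h] at this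
  rw [← this]
  exact Set.subset_union_left

/-- The one-step operator on pairs `(I, T)` where `I o` collects input deltas into
`o` and `T` the set of triggered nodes. -/
def Phi : (O → Set S) × Set O → (O → Set S) × Set O := fun p =>
  (fun o => (Si ∩ inS o) ∪
      ⋃ o', ⋃ (_ : o' ∈ p.2 ∧ o ≠ o' ∧ Adjacent inS outS (dirΔ o' (p.1 o')) o),
        dirΔ o' (p.1 o') ∩ inS o,
   {o | Adjacent inS outS Si o} ∪
   {o | ∃ o', o' ∈ p.2 ∧ o ≠ o' ∧ Adjacent inS outS (dirΔ o' (p.1 o')) o})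

include hum in
lemma Phi_mono : Monotone (Phi inS outS dirΔ Si) := by
  rintro p q ⟨h1, h2⟩
  constructor
  · intro o
    apply Set.union_subset_union_right
    intro x hx
    simp only [Set.mem_iUnion] at hx ⊢
    obtain ⟨o', ⟨hT, hne, hadj⟩, hx⟩ := hx
    have hsub : dirΔ o' (p.1 o') ⊆ dirΔ o' (q.1 o') := dir_mono dirΔ hum o' (h1 o')
    exact ⟨o', ⟨h2 hT, hne, adjacent_mono inS outS hsub hadj⟩,
      Set.inter_subset_inter_left _ hsub hx⟩
  · apply Set.union_subset_union_right
    rintro o ⟨o', hT, hne, hadj⟩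
    exact ⟨o', h2 hT, hne,
      adjacent_mono inS outS (dir_mono dirΔ hum o' (h1 o')) hadj⟩

/-- The least fixed point describing the total flow of deltas. -/
noncomputable def LFP : (O → Set S) × Set O :=
  OrderHom.lfp ⟨Phi inS outS dirΔ Si, Phi_mono inS outS dirΔ Si hum⟩

/-- Edges determined by a pair `(I, T)`. -/
def EdgesOf (p : (O → Set S) × Set O) : Set (O × O) :=
  {e | e.1 ∈ p.2 ∧ e.2 ≠ e.1 ∧ Adjacent inS outS (dirΔ e.1 (p.1 e.1)) e.2}

include hum in
lemma LFP_fixed : Phi inS outS dirΔ Si (LFP inS outS dirΔ Si hum) = LFP inS outS dirΔ Si hum := by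
  have h := OrderHom.map_lfp ⟨Phi inS outS dirΔ Si, Phi_mono inS outS dirΔ Si hum⟩
  exact h

include hum in
/-- a finite-union decomposition of `dirΔ` over a bounded predicate. -/
lemma dir_iUnion_subset (o : O) (P : ℕ → Prop) (A : ℕ → Set S) :
    ∀ N, (∃ k, (k < N ∧ P k)) →
      dirΔ o (⋃ k, ⋃ (_ : k < N ∧ P k), A k) ⊆
        ⋃ k, ⋃ (_ : k < N ∧ P k), dirΔ o (A k) := by
  intro N
  induction N with
  | zero => rintro ⟨k, hk, -⟩; omega
  | succ N ih =>
    rintro ⟨k0, hk0, hP0⟩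
    by_cases hPN : P N
    · have hsplit : (⋃ k, ⋃ (_ : k < N + 1 ∧ P k), A k)
          = (⋃ k, ⋃ (_ : k < N ∧ P k), A k) ∪ A N := by
        ext x
        simp only [Set.mem_iUnion, Set.mem_union]
        constructor
        · rintro ⟨k, ⟨hk, hPk⟩, hx⟩
          rcases Nat.lt_succ_iff_lt_or_eq.mp hk with h | rfl
          · exact Or.inl ⟨k, ⟨h, hPk⟩, hx⟩
          · exact Or.inr hx
        · rintro (⟨k, ⟨hk, hPk⟩, hx⟩ | hx)
          · exact ⟨k, ⟨Nat.lt_succ_of_lt hk, hPk⟩, hx⟩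
          · exact ⟨N, ⟨Nat.lt_succ_self N, hPN⟩, hx⟩
      rw [hsplit, ← hum]
      apply Set.union_subset
      · by_cases hex : ∃ k, k < N ∧ P k
        · refine (ih hex).trans ?_
          intro x hx
          simp only [Set.mem_iUnion] at hx ⊢
          obtain ⟨k, ⟨hk, hPk⟩, hx⟩ := hx
          exact ⟨k, ⟨Nat.lt_succ_of_lt hk, hPk⟩, hx⟩
        · have : (⋃ k, ⋃ (_ : k < N ∧ P k), A k) = ∅ := by
            apply Set.eq_empty_iff_forall_notMem.mpr
            intro x hx
            simp only [Set.mem_iUnion] at hx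
            obtain ⟨k, hk, -⟩ := hx
            exact hex ⟨k, hk⟩
          rw [this]
          intro x hx
          have : x ∈ dirΔ o (A N) := dir_mono dirΔ hum o (Set.empty_subset _) hx
          simp only [Set.mem_iUnion]
          exact ⟨N, ⟨Nat.lt_succ_self N, hPN⟩, this⟩
      · intro x hx
        simp only [Set.mem_iUnion]
        exact ⟨N, ⟨Nat.lt_succ_self N, hPN⟩, hx⟩
    · have heq : ∀ k, (k < N + 1 ∧ P k) ↔ (k < N ∧ P k) := by
        intro k
        constructor
        · rintro ⟨hk, hPk⟩
          refine ⟨?_, hPk⟩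
          rcases Nat.lt_succ_iff_lt_or_eq.mp hk with h | rfl
          · exact h
          · exact absurd hPk hPN
        · rintro ⟨hk, hPk⟩; exact ⟨Nat.lt_succ_of_lt hk, hPk⟩
      have h1 : (⋃ k, ⋃ (_ : k < N + 1 ∧ P k), A k) = ⋃ k, ⋃ (_ : k < N ∧ P k), A k := by
        ext x; simp only [Set.mem_iUnion]
        exact ⟨fun ⟨k, hk, hx⟩ => ⟨k, (heq k).mp hk, hx⟩,
          fun ⟨k, hk, hx⟩ => ⟨k, (heq k).mpr hk, hx⟩⟩
      have h2 : (⋃ k, ⋃ (_ : k < N + 1 ∧ P k), dirΔ o (A k))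
          = ⋃ k, ⋃ (_ : k < N ∧ P k), dirΔ o (A k) := by
        ext x; simp only [Set.mem_iUnion]
        exact ⟨fun ⟨k, hk, hx⟩ => ⟨k, (heq k).mp hk, hx⟩,
          fun ⟨k, hk, hx⟩ => ⟨k, (heq k).mpr hk, hx⟩⟩
      rw [h1, h2]
      exact ih ⟨k0, (heq k0).mp ⟨hk0, hP0⟩⟩
end Aux

section Run

variable {O S : Type*} {inS outS : O → Set S} {dirΔ : O → Set S → Set S} {Si : Set S}
  {f : ℕ → CState O S} {n : ℕ}

/-- Any node in the queue is eventually dequeued, with its `C` only having grown. -/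
lemma exec_dequeue (hf : Exec inS outS dirΔ Si f n) :
    ∀ m k, k ≤ n → n - k ≤ m → ∀ o, o ∈ (f k).queue →
      ∃ l q, k ≤ l ∧ l < n ∧ (f l).queue = o :: q ∧ (f k).C o ⊆ (f l).C o := by
  intro m
  induction m with
  | zero =>
    intro k hk hm o ho
    have hkn : k = n := by omega
    subst hkn
    rw [hf.2.2] at ho
    simp at ho
  | succ m ih =>
    intro k hk hm o ho
    rcases eq_or_lt_of_le hk with rfl | hk'
    · rw [hf.2.2] at ho; simp at ho
    · obtain ⟨o₀, q₀, hq, hE, hC0, hC, hnd, hmem⟩ := hf.2.1 k hk'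
      by_cases heq : o = o₀
      · subst heq
        exact ⟨k, q₀, le_refl _, hk', hq, subset_rfl⟩
      · have ho' : o ∈ q₀ := by
          rw [hq] at ho
          rcases List.mem_cons.mp ho with h | h
          · exact absurd h heq
          · exact h
        have hoq : o ∈ (f (k + 1)).queue := (hmem o).mpr (Or.inl ho')
        obtain ⟨l, q, hl1, hl2, hl3, hl4⟩ := ih (k + 1) hk' (by omega) o hoq
        refine ⟨l, q, by omega, hl2, hl3, subset_trans ?_ hl4⟩
        rw [hC o heq]
        exact Set.subset_union_left

/-- Nodes not in the queue have empty `C`. -/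
lemma exec_C_empty (hf : Exec inS outS dirΔ Si f n) :
    ∀ k, k ≤ n → ∀ o, o ∉ (f k).queue → (f k).C o = ∅ := by
  intro k
  induction k with
  | zero =>
    intro _ o ho
    rw [hf.1.2.2.1 o]
    apply Set.eq_empty_iff_forall_notMem.mpr
    rintro x ⟨hx1, hx2⟩
    exact ho ((hf.1.2.1 o).mpr ⟨x, Or.inl hx2, hx1⟩)
  | succ k ih =>
    intro hk o ho
    obtain ⟨o₀, q₀, hq, hE, hC0, hC, hnd, hmem⟩ := hf.2.1 k (by omega)
    by_cases heq : o = o₀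
    · subst heq; exact hC0
    · have h2 : ¬ Adjacent inS outS (dirΔ o₀ ((f k).C o₀)) o :=
        fun h => ho ((hmem o).mpr (Or.inr ⟨heq, h⟩))
      have h1 : o ∉ q₀ := fun h => ho ((hmem o).mpr (Or.inl h))
      have h3 : o ∉ (f k).queue := by
        rw [hq]
        intro h
        rcases List.mem_cons.mp h with h | h
        · exact heq h
        · exact h1 h
      rw [hC o heq, ih (by omega) o h3, Set.empty_union]
      apply Set.eq_empty_iff_forall_notMem.mpr
      rintro x ⟨-, hadj⟩
      exact h2 hadj

/-- The edge set only grows. -/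
lemma exec_edges_mono (hf : Exec inS outS dirΔ Si f n) :
    ∀ l, l ≤ n → ∀ k, k ≤ l → (f k).edges ⊆ (f l).edges := by
  intro l
  induction l with
  | zero =>
    intro _ k hk
    have : k = 0 := by omega
    subst this; exact subset_rfl
  | succ l ih =>
    intro hl k hk
    rcases eq_or_lt_of_le hk with rfl | hk'
    · exact subset_rfl
    · obtain ⟨o₀, q₀, hq, hE, hC0, hC, hnd, hmem⟩ := hf.2.1 l (by omega)
      rw [hE]
      exact subset_trans (ih (by omega) k (by omega)) Set.subset_union_left

/-- Main lemma: the final edge set of any terminating execution equals the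
edge set determined by the least fixed point. -/
lemma exec_edges_eq (hum : ∀ o A B, dirΔ o A ∪ dirΔ o B = dirΔ o (A ∪ B))
    (hf : Exec inS outS dirΔ Si f n) :
    (f n).edges = EdgesOf inS outS dirΔ (LFP inS outS dirΔ Si hum) := by
  set L := LFP inS outS dirΔ Si hum with hLdef
  have hfix : Phi inS outS dirΔ Si L = L := LFP_fixed inS outS dirΔ Si hum
  set TotIn : O → Set S :=
    fun o => ⋃ k, ⋃ (_ : k < n ∧ ∃ q, (f k).queue = o :: q), (f k).C o with hTotIn
  set Trig : Set O := {o | ∃ k, k < n ∧ ∃ q, (f k).queue = o :: q} with hTrig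
  have hdeq := exec_dequeue hf n
  -- a node in the queue at time `k ≤ n` eventually lands (with its data) in `TotIn`
  have hland : ∀ k, k ≤ n → ∀ o, o ∈ (f k).queue →
      o ∈ Trig ∧ (f k).C o ⊆ TotIn o := by
    intro k hk o ho
    obtain ⟨l, q, hl1, hl2, hl3, hl4⟩ := hdeq k hk (by omega) o ho
    constructor
    · exact ⟨l, hl2, q, hl3⟩
    · intro x hx
      exact Set.mem_iUnion.mpr ⟨l, Set.mem_iUnion.mpr ⟨⟨hl2, q, hl3⟩, hl4 hx⟩⟩
  -- decomposition of `dirΔ o' (TotIn o')` into contributions of single dequeues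
  have hdecomp : ∀ o', o' ∈ Trig → ∀ y ∈ dirΔ o' (TotIn o'),
      ∃ k q, k < n ∧ (f k).queue = o' :: q ∧ y ∈ dirΔ o' ((f k).C o') := by
    intro o' hT y hy
    obtain ⟨k₁, hk₁, hq₁⟩ := hT
    have hdec := dir_iUnion_subset dirΔ hum o'
      (fun k => ∃ q, (f k).queue = o' :: q) (fun k => (f k).C o') n ⟨k₁, hk₁, hq₁⟩
    have := hdec hy
    simp only [Set.mem_iUnion] at this
    obtain ⟨k, ⟨hkn, q, hq⟩, hyk⟩ := this
    exact ⟨k, q, hkn, hq, hyk⟩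
  -- completeness: the least fixed point is below the run totals
  have hpre : Phi inS outS dirΔ Si (TotIn, Trig) ≤ (TotIn, Trig) := by
    constructor
    · intro o x hx
      rcases hx with hx | hx
      · -- base contribution from Si
        have hadj : Adjacent inS outS Si o := adjacent_of_mem_inS inS outS hx.1 hx.2
        have ho0 : o ∈ (f 0).queue := (hf.1.2.1 o).mpr hadj
        have hx0 : x ∈ (f 0).C o := by rw [hf.1.2.2.1 o]; exact hx
        exact (hland 0 (Nat.zero_le n) o ho0).2 hx0
      · simp only [Set.mem_iUnion] at hx
        obtain ⟨o', ⟨hT, hne, hadj⟩, hx, hxin⟩ := hx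
        obtain ⟨k, q, hkn, hq, hyk⟩ := hdecomp o' hT x hx
        obtain ⟨o₀, q₀, hq0, hE, hC0, hC, hnd, hmem⟩ := hf.2.1 k hkn
        rw [hq0] at hq
        obtain ⟨rfl, rfl⟩ : o' = o₀ ∧ q = q₀ :=
          ⟨(List.cons.inj hq).1.symm, (List.cons.inj hq).2.symm⟩
        have hadjk : Adjacent inS outS (dirΔ o' ((f k).C o')) o :=
          adjacent_of_mem_inS inS outS hyk hxin
        have hxk1 : x ∈ (f (k + 1)).C o := by
          rw [hC o hne]
          exact Or.inr ⟨⟨hyk, hxin⟩, hadjk⟩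
        have hoq : o ∈ (f (k + 1)).queue := (hmem o).mpr (Or.inr ⟨hne, hadjk⟩)
        exact (hland (k + 1) (by omega) o hoq).2 hxk1
    · intro o ho
      rcases ho with ho | ho
      · exact (hland 0 (Nat.zero_le n) o ((hf.1.2.1 o).mpr ho)).1
      · obtain ⟨o', hT, hne, hadj⟩ := ho
        obtain ⟨y, hy1, hy2⟩ := hadj
        obtain ⟨k, q, hkn, hq, hyk⟩ := hdecomp o' hT y hy2
        obtain ⟨o₀, q₀, hq0, hE, hC0, hC, hnd, hmem⟩ := hf.2.1 k hkn
        rw [hq0] at hq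
        obtain ⟨rfl, rfl⟩ : o' = o₀ ∧ q = q₀ :=
          ⟨(List.cons.inj hq).1.symm, (List.cons.inj hq).2.symm⟩
        have hadjk : Adjacent inS outS (dirΔ o' ((f k).C o')) o := ⟨y, hy1, hyk⟩
        have hoq : o ∈ (f (k + 1)).queue := (hmem o).mpr (Or.inr ⟨hne, hadjk⟩)
        exact (hland (k + 1) (by omega) o hoq).1
  have hle : L ≤ (TotIn, Trig) :=
    OrderHom.lfp_le ⟨Phi inS outS dirΔ Si, Phi_mono inS outS dirΔ Si hum⟩ hpre
  -- soundness: invariant along the execution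
  have hsound : ∀ k, k ≤ n → (∀ o, (f k).C o ⊆ L.1 o) ∧
      (∀ o, o ∈ (f k).queue → o ∈ L.2) ∧ (f k).edges ⊆ EdgesOf inS outS dirΔ L := by
    intro k
    induction k with
    | zero =>
      intro _
      refine ⟨?_, ?_, ?_⟩
      · intro o x hx
        rw [hf.1.2.2.1 o] at hx
        rw [← hfix]
        exact Or.inl hx
      · intro o ho
        rw [← hfix]
        exact Or.inl ((hf.1.2.1 o).mp ho)
      · rw [hf.1.2.2.2]
        exact Set.empty_subset _
    | succ k ih =>
      intro hk
      obtain ⟨ihC, ihQ, ihE⟩ := ih (by omega)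
      obtain ⟨o₀, q₀, hq0, hE, hC0, hC, hnd, hmem⟩ := hf.2.1 k (by omega)
      have ho₀T : o₀ ∈ L.2 := ihQ o₀ (by rw [hq0]; exact List.mem_cons_self)
      have hdsub : dirΔ o₀ ((f k).C o₀) ⊆ dirΔ o₀ (L.1 o₀) :=
        dir_mono dirΔ hum o₀ (ihC o₀)
      refine ⟨?_, ?_, ?_⟩
      · intro o x hx
        by_cases heq : o = o₀
        · subst heq; rw [hC0] at hx; exact absurd hx (Set.notMem_empty x)
        · rw [hC o heq] at hx
          rcases hx with hx | ⟨⟨hx1, hx2⟩, hadj⟩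
          · exact ihC o hx
          · rw [← hfix]
            refine Or.inr (Set.mem_iUnion.mpr ⟨o₀, Set.mem_iUnion.mpr
              ⟨⟨ho₀T, heq, adjacent_mono inS outS hdsub hadj⟩, hdsub hx1, hx2⟩⟩)
      · intro o ho
        rcases (hmem o).mp ho with ho' | ⟨hne, hadj⟩
        · exact ihQ o (by rw [hq0]; exact List.mem_cons_of_mem o₀ ho')
        · rw [← hfix]
          exact Or.inr ⟨o₀, ho₀T, hne, adjacent_mono inS outS hdsub hadj⟩
      · rw [hE]
        apply Set.union_subset ihE
        rintro ⟨a, b⟩ ⟨rfl, hbne, hadj⟩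
        exact ⟨ho₀T, hbne, adjacent_mono inS outS hdsub hadj⟩
  apply Set.Subset.antisymm
  · exact (hsound n le_rfl).2.2
  · rintro ⟨o', o⟩ ⟨hT, hne, hadj⟩
    have hT' : o' ∈ Trig := hle.2 hT
    have hadj' : Adjacent inS outS (dirΔ o' (TotIn o')) o :=
      adjacent_mono inS outS (dir_mono dirΔ hum o' (hle.1 o')) hadj
    obtain ⟨y, hy1, hy2⟩ := hadj'
    obtain ⟨k, q, hkn, hq, hyk⟩ := hdecomp o' hT' y hy2
    obtain ⟨o₀, q₀, hq0, hE, hC0, hC, hnd, hmem⟩ := hf.2.1 k hkn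
    rw [hq0] at hq
    obtain ⟨rfl, rfl⟩ : o' = o₀ ∧ q = q₀ :=
          ⟨(List.cons.inj hq).1.symm, (List.cons.inj hq).2.symm⟩
    have : ((o', o) : O × O) ∈ (f (k + 1)).edges := by
      rw [hE]
      exact Or.inr ⟨rfl, hne, ⟨y, hy1, hyk⟩⟩
    exact exec_edges_mono hf n le_rfl (k + 1) (by omega) this

end Run

/-- If all `dir_Δ` functions are union monotonic, then any two terminating,
non-aborting executions of the dependency-graph construction for the same eGDN
and the same set `Si` of initially modified slots produce the same final edge
set of `G_T`, regardless of the order in which nodes were enqueued/dequeued. -/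
theorem stmt9 {O S : Type*} (inS outS : O → Set S)
    (dirΔ : O → Set S → Set S)
    (hum : ∀ o A B, dirΔ o A ∪ dirΔ o B = dirΔ o (A ∪ B))
    (Si : Set S)
    (f g : ℕ → CState O S) (n m : ℕ)
    (hf : Exec inS outS dirΔ Si f n)
    (hg : Exec inS outS dirΔ Si g m)
    (hfa : ¬ HasCycle (f n).edges)
    (hga : ¬ HasCycle (g m).edges) :
    (f n).edges = (g m).edges := by
  rw [exec_edges_eq hum hf, exec_edges_eq hum hg]
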